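/- Let 1 < q < ∞ and α > 0. There exists a constant C = C(n, q, α) > 0 such that for every z ∈ ℝⁿ with z ≠ 0, ( ∫₀^∞ |t^α ∂_t^α p_t(z)|^q dt/t )^{1/q} ≤ C · |z|^{−n}. -/

import Mathlib

open MeasureTheory Set
open scoped ENNReal

/-- The Poisson kernel of the upper half-space `ℝ^{n+1}_+`:
`p_t(x) = Γ((n+1)/2) π^{−(n+1)/2} t (t² + |x|²)^{−(n+1)/2}`. -/
noncomputable def poissonKernelHalfSpace (n : ℕ) (t : ℝ) (x : EuclideanSpace ℝ (Fin n)) : ℝ :=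
  Real.Gamma (((n : ℝ) + 1) / 2) / Real.pi ^ (((n : ℝ) + 1) / 2) *
    (t * (t ^ 2 + ‖x‖ ^ 2) ^ (-(((n : ℝ) + 1) / 2)))

/-- The smallest integer strictly greater than `α` (for `α ≥ 0`). -/
noncomputable def mOf (α : ℝ) : ℕ := ⌊α⌋₊ + 1

/-- The fractional derivative in `t` of the Poisson kernel, of order `α > 0`, with `m` the
smallest integer strictly exceeding `α`:
`∂_t^α p_t(x) = (e^{−iπ(m−α)}/Γ(m−α)) ∫₀^∞ ∂_t^m p_{t+s}(x) s^{m−α−1} ds`. -/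
noncomputable def fracKernel (n : ℕ) (α : ℝ) (t : ℝ) (x : EuclideanSpace ℝ (Fin n)) : ℂ :=
  Complex.exp ((↑(-(Real.pi * ((mOf α : ℝ) - α))) : ℂ) * Complex.I) /
      (Real.Gamma ((mOf α : ℝ) - α) : ℂ) *
    ((∫ s in Ioi (0 : ℝ),
        iteratedDeriv (mOf α) (fun r => poissonKernelHalfSpace n r x) (t + s) *
          s ^ ((mOf α : ℝ) - α - 1) : ℝ) : ℂ)

/-- `∂_t^α P_t f(x) = ∫_{ℝⁿ} ∂_t^α p_t(x−y) f(y) dy` for a `B`-valued `f`. -/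
noncomputable def fracPoisson (n : ℕ) {B : Type*} [NormedAddCommGroup B] [NormedSpace ℂ B]
    (α t : ℝ) (f : EuclideanSpace ℝ (Fin n) → B) (x : EuclideanSpace ℝ (Fin n)) : B :=
  ∫ y, fracKernel n α t (x - y) • f y

/-- The fractional Littlewood–Paley `g`-function
`g_α^q(f)(x) = (∫₀^∞ ‖t^α ∂_t^α P_t f(x)‖_B^q dt/t)^{1/q}`, with values in `[0,∞]`. -/
noncomputable def gFun (n : ℕ) {B : Type*} [NormedAddCommGroup B] [NormedSpace ℂ B]
    (q α : ℝ) (f : EuclideanSpace ℝ (Fin n) → B) (x : EuclideanSpace ℝ (Fin n)) : ℝ≥0∞ :=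
  (∫⁻ t in Ioi (0 : ℝ),
      ENNReal.ofReal (‖t ^ α • fracPoisson n α t f x‖ ^ q / t)) ^ (1 / q)

/-- The fractional area function
`S_α^q(f)(x) = (∬_{|x−y|<t} ‖t^α ∂_t^α P_t f(y)‖_B^q dy dt/t^{n+1})^{1/q}`,
with values in `[0,∞]`. -/
noncomputable def areaFun (n : ℕ) {B : Type*} [NormedAddCommGroup B] [NormedSpace ℂ B]
    (q α : ℝ) (f : EuclideanSpace ℝ (Fin n) → B) (x : EuclideanSpace ℝ (Fin n)) : ℝ≥0∞ :=
  (∫⁻ t in Ioi (0 : ℝ), ∫⁻ y in {y | ‖x - y‖ < t},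
      ENNReal.ofReal (‖t ^ α • fracPoisson n α t f y‖ ^ q / t ^ (n + 1))) ^ (1 / q)

/-- The fractional `g*_λ`-function
`g_{λ,α}^{q,*}(f)(x) = (∬_{ℝⁿ×(0,∞)} (t/(t+|x−y|))^{λn} ‖t^α ∂_t^α P_t f(y)‖_B^q
dy dt/t^{n+1})^{1/q}`, with values in `[0,∞]`. -/
noncomputable def gStarFun (n : ℕ) {B : Type*} [NormedAddCommGroup B] [NormedSpace ℂ B]
    (q α lam : ℝ) (f : EuclideanSpace ℝ (Fin n) → B) (x : EuclideanSpace ℝ (Fin n)) : ℝ≥0∞ :=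
  (∫⁻ t in Ioi (0 : ℝ), ∫⁻ y,
      ENNReal.ofReal ((t / (t + ‖x - y‖)) ^ (lam * n) *
        ‖t ^ α • fracPoisson n α t f y‖ ^ q / t ^ (n + 1))) ^ (1 / q)


namespace Stmt6Aux

noncomputable def tval (b κ : ℝ) (c : ℝ × ℕ × ℕ) (r : ℝ) : ℝ :=
  c.1 * r ^ c.2.1 * (r ^ 2 + b) ^ (-(κ + (c.2.2 : ℝ)))

noncomputable def tstep (κ : ℝ) (c : ℝ × ℕ × ℕ) : List (ℝ × ℕ × ℕ) :=
  (if c.2.1 = 0 then [] else [(c.1 * c.2.1, c.2.1 - 1, c.2.2)]) ++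
    [(-(2 * c.1 * (κ + (c.2.2 : ℝ))), c.2.1 + 1, c.2.2 + 1)]

noncomputable def tsum (b κ : ℝ) (L : List (ℝ × ℕ × ℕ)) (r : ℝ) : ℝ :=
  (L.map fun c => tval b κ c r).sum

lemma hasDerivAt_tval {b : ℝ} (hb : 0 < b) (κ : ℝ) (c : ℝ × ℕ × ℕ) (r : ℝ) :
    HasDerivAt (fun r => tval b κ c r) (tsum b κ (tstep κ c) r) r := by
  obtain ⟨c₁, j, k⟩ := c
  have hpos : (0:ℝ) < r ^ 2 + b := by positivity
  have h1 : HasDerivAt (fun r : ℝ => r ^ j) ((j:ℝ) * r ^ (j-1)) r := hasDerivAt_pow j r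
  have hbase : HasDerivAt (fun r : ℝ => r ^ 2 + b) (2 * r) r := by
    simpa using ((hasDerivAt_pow 2 r).add_const b)
  have h2 : HasDerivAt (fun r : ℝ => (r ^ 2 + b) ^ (-(κ + (k:ℝ))))
      ((2*r) * (-(κ + (k:ℝ))) * (r^2+b) ^ (-(κ + (k:ℝ)) - 1)) r :=
    hbase.rpow_const (Or.inl hpos.ne')
  have key : HasDerivAt (fun r => tval b κ (c₁, j, k) r)
      (c₁ * ((j:ℝ) * r ^ (j-1) * ((r^2+b) ^ (-(κ + (k:ℝ)))) +
        r ^ j * ((2*r) * (-(κ + (k:ℝ))) * (r^2+b) ^ (-(κ + (k:ℝ)) - 1)))) r := by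
    have := (h1.mul h2).const_mul c₁
    simpa [tval, mul_assoc] using this
  rcases Nat.eq_zero_or_pos j with hj | hj
  · subst hj
    convert key using 1
    simp [tsum, tstep, tval]
    push_cast
    ring_nf
  · convert key using 1
    have hj0 : j ≠ 0 := hj.ne'
    simp [tsum, tstep, tval, hj0]
    push_cast
    ring_nf

lemma hasDerivAt_tsum {b : ℝ} (hb : 0 < b) (κ : ℝ) (L : List (ℝ × ℕ × ℕ)) (r : ℝ) :
    HasDerivAt (fun r => tsum b κ L r) (tsum b κ (L.flatMap (tstep κ)) r) r := by
  induction L with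
  | nil => simpa [tsum] using hasDerivAt_const r (0:ℝ)
  | cons c L ih =>
    have h := (hasDerivAt_tval hb κ c r).add ih
    have e1 : (fun r => tval b κ c r + tsum b κ L r) = fun r => tsum b κ (c :: L) r := by
      funext r; simp [tsum]
    have e2 : tsum b κ (tstep κ c) r + tsum b κ (L.flatMap (tstep κ)) r
        = tsum b κ ((c :: L).flatMap (tstep κ)) r := by
      simp [tsum, List.flatMap_cons]
    rw [← e1, ← e2]
    exact h

noncomputable def iterL (κ c₀ : ℝ) : ℕ → List (ℝ × ℕ × ℕ)
  | 0 => [(c₀, 1, 0)]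
  | m+1 => (iterL κ c₀ m).flatMap (tstep κ)

lemma iteratedDeriv_tsum {b : ℝ} (hb : 0 < b) (κ c₀ : ℝ) (m : ℕ) :
    iteratedDeriv m (fun r => tsum b κ (iterL κ c₀ 0) r) = fun r => tsum b κ (iterL κ c₀ m) r := by
  induction m with
  | zero => simp [iteratedDeriv_zero]
  | succ m ih =>
    rw [iteratedDeriv_succ, ih]
    funext r
    exact (hasDerivAt_tsum hb κ (iterL κ c₀ m) r).deriv

lemma iterL_mem (κ c₀ : ℝ) (m : ℕ) {c : ℝ × ℕ × ℕ} (hc : c ∈ iterL κ c₀ m) :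
    c.2.1 + m = 1 + 2 * c.2.2 := by
  induction m generalizing c with
  | zero => simp [iterL] at hc; subst hc; simp
  | succ m ih =>
    simp only [iterL, List.mem_flatMap] at hc
    obtain ⟨d, hd, hcd⟩ := hc
    have hdc := ih hd
    obtain ⟨d₁, j, k⟩ := d
    simp only [tstep] at hcd
    rcases Nat.eq_zero_or_pos j with hj | hj
    · subst hj
      simp at hcd
      subst hcd
      simp at hdc ⊢
      omega
    · rw [if_neg hj.ne'] at hcd
      simp at hcd hdc
      rcases hcd with h | h <;> subst h <;> simp <;> omega

end Stmt6Aux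

namespace Stmt6Aux

lemma tval_bound {n m : ℕ} {κ a r : ℝ} (hκ : 2 * κ = (n:ℝ) + 1) (ha : 0 < a) (hr : 0 < r)
    {c : ℝ × ℕ × ℕ} (hc : c.2.1 + m = 1 + 2 * c.2.2) :
    |tval (a^2) κ c r| ≤ |c.1| * 2 ^ (κ + (c.2.2:ℝ)) / (r + a) ^ (n + m) := by
  obtain ⟨c₁, j, k⟩ := c
  simp only at hc
  have hra : 0 < r + a := by linarith
  have hκ0 : 0 ≤ κ := by nlinarith [Nat.cast_nonneg (α := ℝ) n]
  have hX : (0:ℝ) < r ^ 2 + a ^ 2 := by positivity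
  have habs : |tval (a^2) κ (c₁, j, k) r| =
      |c₁| * (r ^ j * (r ^ 2 + a ^ 2) ^ (-(κ + (k:ℝ)))) := by
    rw [tval, abs_mul, abs_mul, mul_assoc]
    congr 1
    congr 1
    · exact abs_of_nonneg (by positivity)
    · exact abs_of_nonneg (Real.rpow_nonneg hX.le _)
  rw [habs, mul_div_assoc]
  refine mul_le_mul_of_nonneg_left ?_ (abs_nonneg _)
  have h2pos : (0:ℝ) < 2 ^ (κ + (k:ℝ)) := Real.rpow_pos_of_pos two_pos _
  have hXp : (0:ℝ) < (r ^ 2 + a ^ 2) ^ (κ + (k:ℝ)) := Real.rpow_pos_of_pos hX _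
  rw [Real.rpow_neg hX.le, ← div_eq_mul_inv, div_le_div_iff₀ hXp (by positivity)]
  have e1 : (((r+a)^2 / 2 : ℝ)) ^ (κ + (k:ℝ)) = (r+a) ^ (n+1+2*k) / 2 ^ (κ + (k:ℝ)) := by
    rw [Real.div_rpow (by positivity) (by norm_num)]
    congr 1
    rw [← Real.rpow_natCast (r+a) 2, ← Real.rpow_mul hra.le, ← Real.rpow_natCast (r+a) (n+1+2*k)]
    congr 1
    push_cast
    linarith
  have hXge : (r+a) ^ (n+1+2*k) / 2 ^ (κ + (k:ℝ)) ≤ (r ^ 2 + a ^ 2) ^ (κ + (k:ℝ)) := by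
    rw [← e1]
    exact Real.rpow_le_rpow (by positivity) (by nlinarith [sq_nonneg (r - a)]) (by positivity)
  calc r ^ j * (r + a) ^ (n + m)
      ≤ (r + a) ^ j * (r + a) ^ (n + m) := by
        gcongr <;> linarith
    _ = (r + a) ^ (n + 1 + 2 * k) := by rw [← pow_add]; congr 1; omega
    _ = 2 ^ (κ + (k:ℝ)) * ((r+a) ^ (n+1+2*k) / 2 ^ (κ + (k:ℝ))) := by
        rw [mul_div_cancel₀ _ h2pos.ne']
    _ ≤ 2 ^ (κ + (k:ℝ)) * (r ^ 2 + a ^ 2) ^ (κ + (k:ℝ)) :=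
        mul_le_mul_of_nonneg_left hXge h2pos.le

noncomputable def Cconst (κ : ℝ) (L : List (ℝ × ℕ × ℕ)) : ℝ :=
  (L.map fun c => |c.1| * 2 ^ (κ + (c.2.2:ℝ))).sum

lemma Cconst_nonneg (κ : ℝ) (L : List (ℝ × ℕ × ℕ)) : 0 ≤ Cconst κ L := by
  apply List.sum_nonneg
  intro x hx
  simp only [List.mem_map] at hx
  obtain ⟨c, _, rfl⟩ := hx
  positivity

lemma tsum_bound {n m : ℕ} {κ a r : ℝ} (hκ : 2 * κ = (n:ℝ) + 1) (ha : 0 < a) (hr : 0 < r)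
    {L : List (ℝ × ℕ × ℕ)} (hL : ∀ c ∈ L, c.2.1 + m = 1 + 2 * c.2.2) :
    |tsum (a^2) κ L r| ≤ Cconst κ L / (r + a) ^ (n + m) := by
  induction L with
  | nil => simp [tsum, Cconst]
  | cons c L ih =>
    have h1 := tval_bound (m := m) hκ ha hr (hL c List.mem_cons_self)
    have h2 := ih (fun d hd => hL d (List.mem_cons_of_mem c hd))
    calc |tsum (a^2) κ (c :: L) r| ≤ |tval (a^2) κ c r| + |tsum (a^2) κ L r| := by
          simp only [tsum, List.map_cons, List.sum_cons]
          exact abs_add_le _ _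
      _ ≤ |c.1| * 2 ^ (κ + (c.2.2:ℝ)) / (r + a) ^ (n + m) + Cconst κ L / (r + a) ^ (n + m) :=
          add_le_add h1 h2
      _ = Cconst κ (c :: L) / (r + a) ^ (n + m) := by
          rw [← add_div]
          norm_num [Cconst]

lemma pois_iteratedDeriv_bound (n : ℕ) (m : ℕ) :
    ∃ D : ℝ, 0 ≤ D ∧ ∀ (z : EuclideanSpace ℝ (Fin n)), z ≠ 0 → ∀ r : ℝ, 0 < r →
      |iteratedDeriv m (fun r => poissonKernelHalfSpace n r z) r| ≤ D / (r + ‖z‖) ^ (n + m) := by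
  set κ : ℝ := ((n:ℝ) + 1) / 2 with hκdef
  set c₀ : ℝ := Real.Gamma κ / Real.pi ^ κ with hc₀def
  refine ⟨Cconst κ (iterL κ c₀ m), Cconst_nonneg _ _, ?_⟩
  intro z hz r hr
  have ha : 0 < ‖z‖ := norm_pos_iff.mpr hz
  have hb : (0:ℝ) < ‖z‖ ^ 2 := by positivity
  have funeq : (fun r => poissonKernelHalfSpace n r z) = fun r => tsum (‖z‖^2) κ (iterL κ c₀ 0) r := by
    funext r
    simp only [poissonKernelHalfSpace, tsum, iterL, tval, List.map_cons, List.map_nil, List.sum_cons,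
      List.sum_nil, Nat.cast_zero, add_zero, pow_one]
    rw [hc₀def, hκdef]
    ring_nf
  rw [funeq, iteratedDeriv_tsum hb]
  exact tsum_bound (by rw [hκdef]; ring) ha hr (fun c hc => iterL_mem κ c₀ m hc)

end Stmt6Aux

namespace Stmt6Aux

lemma domI {c β : ℝ} {N : ℕ} (hc : 0 < c) (hβ0 : 0 < β) (hβN : β < N) :
    IntegrableOn (fun s => ((c + s) ^ N)⁻¹ * s ^ (β - 1)) (Ioi (0:ℝ)) ∧
    ∫ s in Ioi (0:ℝ), ((c + s) ^ N)⁻¹ * s ^ (β - 1) ≤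
      (1/β + 1/((N:ℝ) - β)) * c ^ (β - (N:ℝ)) := by
  have hcont : ∀ s₀ : Set ℝ, s₀ ⊆ Ioi 0 →
      ContinuousOn (fun s : ℝ => ((c + s) ^ N)⁻¹ * s ^ (β - 1)) s₀ := by
    intro s₀ hsub s hs
    have hs0 : 0 < s := hsub hs
    apply ContinuousAt.continuousWithinAt
    refine ContinuousAt.mul ?_ ?_
    · exact (((continuous_const.add continuous_id).pow N).continuousAt).inv₀
        (by show (c + s) ^ N ≠ 0; positivity)
    · exact Real.continuousAt_rpow_const s _ (Or.inl hs0.ne')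
  have hg1 : IntegrableOn (fun s : ℝ => (c ^ N)⁻¹ * s ^ (β - 1)) (Ioc (0:ℝ) c) := by
    refine Integrable.const_mul ?_ _
    exact (intervalIntegrable_iff_integrableOn_Ioc_of_le hc.le).mp
      (intervalIntegral.intervalIntegrable_rpow' (by linarith))
  have hb1 : ∀ s ∈ Ioc (0:ℝ) c, ((c + s) ^ N)⁻¹ * s ^ (β - 1) ≤ (c ^ N)⁻¹ * s ^ (β - 1) := by
    intro s hs
    have hs0 : 0 < s := hs.1
    refine mul_le_mul_of_nonneg_right ?_ (Real.rpow_nonneg hs0.le _)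
    refine inv_anti₀ (pow_pos hc N) ?_
    exact pow_le_pow_left₀ hc.le (by linarith) N
  have hg2 : IntegrableOn (fun s : ℝ => s ^ (β - 1 - N)) (Ioi c) :=
    integrableOn_Ioi_rpow_of_lt (by linarith) hc
  have hb2 : ∀ s ∈ Ioi c, ((c + s) ^ N)⁻¹ * s ^ (β - 1) ≤ s ^ (β - 1 - N) := by
    intro s hs
    have hsc : c < s := hs
    have hs0 : 0 < s := hc.trans hsc
    have e : s ^ (β - 1 - N) = (s ^ N)⁻¹ * s ^ (β - 1) := by
      rw [← Real.rpow_natCast s N, ← Real.rpow_neg hs0.le, ← Real.rpow_add hs0]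
      ring_nf
    rw [e]
    refine mul_le_mul_of_nonneg_right ?_ (Real.rpow_nonneg hs0.le _)
    refine inv_anti₀ (pow_pos hs0 N) ?_
    exact pow_le_pow_left₀ hs0.le (by linarith) N
  have hint1 : IntegrableOn (fun s => ((c + s) ^ N)⁻¹ * s ^ (β - 1)) (Ioc (0:ℝ) c) := by
    refine hg1.mono' ((hcont _ Ioc_subset_Ioi_self).aestronglyMeasurable measurableSet_Ioc) ?_
    refine ae_restrict_of_forall_mem measurableSet_Ioc fun s hs => ?_
    have hs0 : 0 < s := hs.1
    rw [Real.norm_eq_abs, abs_of_nonneg (mul_nonneg (by positivity) (Real.rpow_nonneg hs0.le _))]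
    exact hb1 s hs
  have hint2 : IntegrableOn (fun s => ((c + s) ^ N)⁻¹ * s ^ (β - 1)) (Ioi c) := by
    refine hg2.mono' ((hcont _ (Ioi_subset_Ioi hc.le)).aestronglyMeasurable measurableSet_Ioi) ?_
    refine ae_restrict_of_forall_mem measurableSet_Ioi fun s hs => ?_
    have hs0 : 0 < s := hc.trans hs
    rw [Real.norm_eq_abs, abs_of_nonneg (mul_nonneg (by positivity) (Real.rpow_nonneg hs0.le _))]
    exact hb2 s hs
  have hunion : Ioc (0:ℝ) c ∪ Ioi c = Ioi 0 := Ioc_union_Ioi_eq_Ioi hc.le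
  have hintall : IntegrableOn (fun s => ((c + s) ^ N)⁻¹ * s ^ (β - 1)) (Ioi (0:ℝ)) := by
    rw [← hunion]; exact hint1.union hint2
  refine ⟨hintall, ?_⟩
  have hsplit : ∫ s in Ioi (0:ℝ), ((c + s) ^ N)⁻¹ * s ^ (β - 1) =
      (∫ s in Ioc (0:ℝ) c, ((c + s) ^ N)⁻¹ * s ^ (β - 1)) +
        ∫ s in Ioi c, ((c + s) ^ N)⁻¹ * s ^ (β - 1) := by
    rw [← hunion, setIntegral_union (Ioc_disjoint_Ioi le_rfl) measurableSet_Ioi hint1 hint2]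
  rw [hsplit]
  have hI1 : (∫ s in Ioc (0:ℝ) c, ((c + s) ^ N)⁻¹ * s ^ (β - 1)) ≤
      (1/β) * c ^ (β - (N:ℝ)) := by
    calc (∫ s in Ioc (0:ℝ) c, ((c + s) ^ N)⁻¹ * s ^ (β - 1))
        ≤ ∫ s in Ioc (0:ℝ) c, (c ^ N)⁻¹ * s ^ (β - 1) :=
          setIntegral_mono_on hint1 hg1 measurableSet_Ioc hb1
      _ = (c ^ N)⁻¹ * ∫ s in Ioc (0:ℝ) c, s ^ (β - 1) := by rw [integral_const_mul]
      _ = (1/β) * c ^ (β - (N:ℝ)) := by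
          rw [← intervalIntegral.integral_of_le hc.le,
            integral_rpow (Or.inl (by linarith : (-1:ℝ) < β - 1))]
          have hcN : c ^ (β - (N:ℝ)) = c ^ β * ((c:ℝ) ^ N)⁻¹ := by
            rw [Real.rpow_sub hc, Real.rpow_natCast, div_eq_mul_inv]
          rw [sub_add_cancel, Real.zero_rpow hβ0.ne', hcN]
          ring
  have hI2 : (∫ s in Ioi c, ((c + s) ^ N)⁻¹ * s ^ (β - 1)) ≤
      (1/((N:ℝ) - β)) * c ^ (β - (N:ℝ)) := by
    calc (∫ s in Ioi c, ((c + s) ^ N)⁻¹ * s ^ (β - 1))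
        ≤ ∫ s in Ioi c, s ^ (β - 1 - N) :=
          setIntegral_mono_on hint2 hg2 measurableSet_Ioi hb2
      _ = -c ^ (β - 1 - N + 1) / (β - 1 - N + 1) := integral_Ioi_rpow_of_lt (by linarith) hc
      _ = (1/((N:ℝ) - β)) * c ^ (β - (N:ℝ)) := by
          rw [show β - 1 - (N:ℝ) + 1 = β - (N:ℝ) by ring, div_eq_mul_inv,
            show β - (N:ℝ) = -((N:ℝ) - β) by ring, inv_neg]
          ring
  linarith [hI1, hI2]


lemma fracKernel_bound (n : ℕ) (hn : 1 ≤ n) {α : ℝ} (hα : 0 < α) :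
    ∃ A : ℝ, 0 < A ∧ ∀ z : EuclideanSpace ℝ (Fin n), z ≠ 0 → ∀ t : ℝ, 0 < t →
      ‖fracKernel n α t z‖ ≤ A * (t + ‖z‖) ^ (-((n:ℝ) + α)) := by
  set m := mOf α with hm
  set β : ℝ := (m:ℝ) - α with hβdef
  have hm1 : 1 ≤ m := Nat.le_add_left 1 _
  have hβ0 : 0 < β := by
    have h := Nat.lt_floor_add_one α
    rw [hβdef, hm, mOf]
    push_cast
    linarith
  have hβ1 : β ≤ 1 := by
    have h := Nat.floor_le hα.le
    rw [hβdef, hm, mOf]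
    push_cast
    linarith
  have hΓ : 0 < Real.Gamma β := Real.Gamma_pos_of_pos hβ0
  have hβN : β < ((n + m : ℕ):ℝ) := by
    push_cast
    have : (1:ℝ) ≤ (n:ℝ) := by exact_mod_cast hn
    have : (1:ℝ) ≤ (m:ℝ) := by exact_mod_cast hm1
    linarith
  have hNβ : (0:ℝ) < ((n + m : ℕ):ℝ) - β := by linarith
  obtain ⟨D, hD0, hD⟩ := pois_iteratedDeriv_bound n m
  set K : ℝ := 1/β + 1/(((n + m : ℕ):ℝ) - β) with hK
  have hK0 : 0 ≤ K := by positivity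
  refine ⟨D * K / Real.Gamma β + 1, by positivity, ?_⟩
  intro z hz t ht
  have ha : 0 < ‖z‖ := norm_pos_iff.mpr hz
  have hc : 0 < t + ‖z‖ := by linarith
  obtain ⟨hint, hbound⟩ := domI (N := n + m) hc hβ0 hβN
  set F : ℝ → ℝ := fun s => iteratedDeriv m (fun r => poissonKernelHalfSpace n r z) (t + s) * s ^ (β - 1)
    with hF
  have hptw : ∀ᵐ s ∂(volume.restrict (Ioi (0:ℝ))),
      ‖F s‖ ≤ D * (((t + ‖z‖ + s) ^ (n + m))⁻¹ * s ^ (β - 1)) := by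
    refine ae_restrict_of_forall_mem measurableSet_Ioi fun s hs => ?_
    have hs0 : 0 < s := hs
    have hd := hD z hz (t + s) (by linarith)
    rw [hF]
    rw [Real.norm_eq_abs, abs_mul, abs_of_nonneg (Real.rpow_nonneg hs0.le _)]
    have he : t + s + ‖z‖ = t + ‖z‖ + s := by ring
    rw [he] at hd
    calc |iteratedDeriv m (fun r => poissonKernelHalfSpace n r z) (t + s)| * s ^ (β - 1)
        ≤ (D / (t + ‖z‖ + s) ^ (n + m)) * s ^ (β - 1) :=
          mul_le_mul_of_nonneg_right hd (Real.rpow_nonneg hs0.le _)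
      _ = D * (((t + ‖z‖ + s) ^ (n + m))⁻¹ * s ^ (β - 1)) := by ring
  have hIb : ‖∫ s in Ioi (0:ℝ), F s‖ ≤
      D * K * (t + ‖z‖) ^ (β - ((n + m : ℕ):ℝ)) := by
    calc ‖∫ s in Ioi (0:ℝ), F s‖
        ≤ ∫ s in Ioi (0:ℝ), D * (((t + ‖z‖ + s) ^ (n + m))⁻¹ * s ^ (β - 1)) :=
          norm_integral_le_of_norm_le (hint.const_mul D) hptw
      _ = D * ∫ s in Ioi (0:ℝ), ((t + ‖z‖ + s) ^ (n + m))⁻¹ * s ^ (β - 1) :=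
          integral_const_mul _ _
      _ ≤ D * (K * (t + ‖z‖) ^ (β - ((n + m : ℕ):ℝ))) :=
          mul_le_mul_of_nonneg_left hbound hD0
      _ = D * K * (t + ‖z‖) ^ (β - ((n + m : ℕ):ℝ)) := by ring
  have habs : ‖fracKernel n α t z‖ = ‖∫ s in Ioi (0:ℝ), F s‖ / Real.Gamma β := by
    rw [fracKernel, ← hm, ← hβdef, hF]
    rw [norm_mul, norm_div, Complex.norm_real, Complex.norm_real]
    have : ‖Complex.exp ((↑(-(Real.pi * ((m:ℝ) - α))) : ℂ) * Complex.I)‖ = 1 := by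
      rw [Complex.norm_exp]
      simp
    rw [this, Real.norm_of_nonneg hΓ.le]
    ring
  rw [habs]
  rw [div_le_iff₀ hΓ]
  have hexp : β - ((n + m : ℕ):ℝ) = -((n:ℝ) + α) := by
    rw [hβdef]
    push_cast
    ring
  rw [hexp] at hIb
  calc ‖∫ s in Ioi (0:ℝ), F s‖ ≤ D * K * (t + ‖z‖) ^ (-((n:ℝ) + α)) := hIb
    _ = (D * K / Real.Gamma β) * (t + ‖z‖) ^ (-((n:ℝ) + α)) * Real.Gamma β := by
        field_simp
    _ ≤ (D * K / Real.Gamma β + 1) * (t + ‖z‖) ^ (-((n:ℝ) + α)) * Real.Gamma β := by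
        have h1 : (0:ℝ) ≤ (t + ‖z‖) ^ (-((n:ℝ) + α)) := Real.rpow_nonneg hc.le _
        nlinarith [hΓ]

end Stmt6Aux


/-- For `1 < q < ∞` and `α > 0` there is `C = C(n,q,α) > 0` such that for
every `z ≠ 0`, `(∫₀^∞ |t^α ∂_t^α p_t(z)|^q dt/t)^{1/q} ≤ C |z|^{−n}`. -/
theorem stmt_6 (n : ℕ) (hn : 1 ≤ n) (q : ℝ) (hq : 1 < q) (α : ℝ) (hα : 0 < α) :
    ∃ C : ℝ, 0 < C ∧ ∀ z : EuclideanSpace ℝ (Fin n), z ≠ 0 →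
      (∫⁻ t in Ioi (0 : ℝ),
          ENNReal.ofReal ((t ^ α * ‖fracKernel n α t z‖) ^ q / t)) ^ (1 / q) ≤
        ENNReal.ofReal (C / ‖z‖ ^ n) := by
  obtain ⟨A, hA0, hA⟩ := Stmt6Aux.fracKernel_bound n hn hα
  have hq0 : (0:ℝ) < q := lt_trans one_pos hq
  have hn0 : (0:ℝ) < (n:ℝ) := by exact_mod_cast hn
  have hnn : (0:ℝ) ≤ (n:ℝ) + α := by linarith
  set M : ℝ := A ^ q * (1/(α*q) + 1/((n:ℝ)*q)) with hM
  have hM0 : 0 < M := by positivity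
  refine ⟨M ^ (1/q), Real.rpow_pos_of_pos hM0 _, ?_⟩
  intro z hz
  have ha : 0 < ‖z‖ := norm_pos_iff.mpr hz
  set a : ℝ := ‖z‖ with hadef
  have key : (∫⁻ t in Ioi (0:ℝ),
      ENNReal.ofReal ((t ^ α * ‖fracKernel n α t z‖) ^ q / t)) ≤
      ENNReal.ofReal (M * a ^ (-((n:ℝ)*q))) := by
    rw [← Ioc_union_Ioi_eq_Ioi ha.le,
      lintegral_union measurableSet_Ioi (Ioc_disjoint_Ioi le_rfl)]
    have piece1 : (∫⁻ t in Ioc (0:ℝ) a,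
        ENNReal.ofReal ((t ^ α * ‖fracKernel n α t z‖) ^ q / t)) ≤
        ENNReal.ofReal ((A ^ q / (α*q)) * a ^ (-((n:ℝ)*q))) := by
      have mono : ∀ t ∈ Ioc (0:ℝ) a,
          ENNReal.ofReal ((t ^ α * ‖fracKernel n α t z‖) ^ q / t) ≤
          ENNReal.ofReal ((A ^ q * a ^ (-(((n:ℝ)+α))*q)) * t ^ (α*q - 1)) := by
        intro t ht
        have ht0 : 0 < t := ht.1
        apply ENNReal.ofReal_le_ofReal
        have habs := hA z hz t ht0
        have h2 : (t + a) ^ (-((n:ℝ)+α)) ≤ a ^ (-((n:ℝ)+α)) :=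
          Real.rpow_le_rpow_of_nonpos ha (by linarith) (by linarith)
        have e0 : (0:ℝ) ≤ t ^ α * ‖fracKernel n α t z‖ :=
          mul_nonneg (Real.rpow_nonneg ht0.le _) (norm_nonneg _)
        have h3 : t ^ α * ‖fracKernel n α t z‖ ≤
            t ^ α * (A * a ^ (-((n:ℝ)+α))) := by
          refine mul_le_mul_of_nonneg_left ?_ (Real.rpow_nonneg ht0.le _)
          exact habs.trans (mul_le_mul_of_nonneg_left h2 hA0.le)
        have h4 := Real.rpow_le_rpow e0 h3 hq0.le
        have h5 : (t ^ α * (A * a ^ (-((n:ℝ)+α)))) ^ q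
            = t ^ (α*q) * (A ^ q * a ^ (-(((n:ℝ)+α))*q)) := by
          rw [Real.mul_rpow (Real.rpow_nonneg ht0.le _) (by positivity),
            Real.mul_rpow hA0.le (Real.rpow_nonneg ha.le _),
            ← Real.rpow_mul ht0.le, ← Real.rpow_mul ha.le]
        calc (t ^ α * ‖fracKernel n α t z‖) ^ q / t
            ≤ (t ^ α * (A * a ^ (-((n:ℝ)+α)))) ^ q / t := by gcongr
          _ = t ^ (α*q) * (A ^ q * a ^ (-(((n:ℝ)+α))*q)) / t := by rw [h5]
          _ = (A ^ q * a ^ (-(((n:ℝ)+α))*q)) * t ^ (α*q - 1) := by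
              rw [Real.rpow_sub ht0, Real.rpow_one]
              ring
      calc (∫⁻ t in Ioc (0:ℝ) a,
          ENNReal.ofReal ((t ^ α * ‖fracKernel n α t z‖) ^ q / t))
          ≤ ∫⁻ t in Ioc (0:ℝ) a,
            ENNReal.ofReal ((A ^ q * a ^ (-(((n:ℝ)+α))*q)) * t ^ (α*q - 1)) :=
            setLIntegral_mono' measurableSet_Ioc mono
        _ = ENNReal.ofReal (∫ t in Ioc (0:ℝ) a,
            (A ^ q * a ^ (-(((n:ℝ)+α))*q)) * t ^ (α*q - 1)) := by
            rw [← ofReal_integral_eq_lintegral_ofReal]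
            · refine Integrable.const_mul ?_ _
              exact (intervalIntegrable_iff_integrableOn_Ioc_of_le ha.le).mp
                (intervalIntegral.intervalIntegrable_rpow' (by nlinarith))
            · refine ae_restrict_of_forall_mem measurableSet_Ioc fun t ht => ?_
              have ht0 : 0 < t := ht.1
              positivity
        _ = ENNReal.ofReal ((A ^ q / (α*q)) * a ^ (-((n:ℝ)*q))) := by
            congr 1
            rw [integral_const_mul, ← intervalIntegral.integral_of_le ha.le,
              integral_rpow (Or.inl (by nlinarith : (-1:ℝ) < α*q - 1))]
            rw [sub_add_cancel, Real.zero_rpow (by positivity : α*q ≠ 0)]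
            rw [show -((n:ℝ)*q) = -(((n:ℝ)+α))*q + α*q by ring, Real.rpow_add ha]
            field_simp
            ring
    have piece2 : (∫⁻ t in Ioi a,
        ENNReal.ofReal ((t ^ α * ‖fracKernel n α t z‖) ^ q / t)) ≤
        ENNReal.ofReal ((A ^ q / ((n:ℝ)*q)) * a ^ (-((n:ℝ)*q))) := by
      have mono : ∀ t ∈ Ioi a,
          ENNReal.ofReal ((t ^ α * ‖fracKernel n α t z‖) ^ q / t) ≤
          ENNReal.ofReal (A ^ q * t ^ (-((n:ℝ)*q) - 1)) := by
        intro t ht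
        have ht0 : 0 < t := ha.trans ht
        apply ENNReal.ofReal_le_ofReal
        have habs := hA z hz t ht0
        have h2 : (t + a) ^ (-((n:ℝ)+α)) ≤ t ^ (-((n:ℝ)+α)) :=
          Real.rpow_le_rpow_of_nonpos ht0 (by linarith) (by linarith)
        have e0 : (0:ℝ) ≤ t ^ α * ‖fracKernel n α t z‖ :=
          mul_nonneg (Real.rpow_nonneg ht0.le _) (norm_nonneg _)
        have h3 : t ^ α * ‖fracKernel n α t z‖ ≤
            t ^ α * (A * t ^ (-((n:ℝ)+α))) := by
          refine mul_le_mul_of_nonneg_left ?_ (Real.rpow_nonneg ht0.le _)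
          exact habs.trans (mul_le_mul_of_nonneg_left h2 hA0.le)
        have h5 : (t ^ α * (A * t ^ (-((n:ℝ)+α)))) ^ q = A ^ q * t ^ (-((n:ℝ)*q)) := by
          rw [show t ^ α * (A * t ^ (-((n:ℝ)+α))) = A * (t ^ α * t ^ (-((n:ℝ)+α))) by ring,
            ← Real.rpow_add ht0,
            Real.mul_rpow hA0.le (Real.rpow_nonneg ht0.le _), ← Real.rpow_mul ht0.le]
          rw [show (α + -((n:ℝ) + α)) * q = -((n:ℝ)*q) by ring]
        calc (t ^ α * ‖fracKernel n α t z‖) ^ q / t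
            ≤ (t ^ α * (A * t ^ (-((n:ℝ)+α)))) ^ q / t := by gcongr
          _ = A ^ q * t ^ (-((n:ℝ)*q)) / t := by rw [h5]
          _ = A ^ q * t ^ (-((n:ℝ)*q) - 1) := by
              rw [Real.rpow_sub ht0, Real.rpow_one]
              ring
      calc (∫⁻ t in Ioi a,
          ENNReal.ofReal ((t ^ α * ‖fracKernel n α t z‖) ^ q / t))
          ≤ ∫⁻ t in Ioi a, ENNReal.ofReal (A ^ q * t ^ (-((n:ℝ)*q) - 1)) :=
            setLIntegral_mono' measurableSet_Ioi mono
        _ = ENNReal.ofReal (∫ t in Ioi a, A ^ q * t ^ (-((n:ℝ)*q) - 1)) := by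
            rw [← ofReal_integral_eq_lintegral_ofReal]
            · exact (integrableOn_Ioi_rpow_of_lt (by nlinarith) ha).const_mul _
            · refine ae_restrict_of_forall_mem measurableSet_Ioi fun t ht => ?_
              have ht0 : 0 < t := ha.trans ht
              positivity
        _ = ENNReal.ofReal ((A ^ q / ((n:ℝ)*q)) * a ^ (-((n:ℝ)*q))) := by
            congr 1
            rw [integral_const_mul, integral_Ioi_rpow_of_lt (by nlinarith) ha]
            rw [show -((n:ℝ)*q) - 1 + 1 = -((n:ℝ)*q) by ring, div_eq_mul_inv, inv_neg]
            ring
    calc (∫⁻ t in Ioc (0:ℝ) a,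
        ENNReal.ofReal ((t ^ α * ‖fracKernel n α t z‖) ^ q / t)) +
        (∫⁻ t in Ioi a,
        ENNReal.ofReal ((t ^ α * ‖fracKernel n α t z‖) ^ q / t))
        ≤ ENNReal.ofReal ((A ^ q / (α*q)) * a ^ (-((n:ℝ)*q))) +
          ENNReal.ofReal ((A ^ q / ((n:ℝ)*q)) * a ^ (-((n:ℝ)*q))) := add_le_add piece1 piece2
      _ = ENNReal.ofReal (M * a ^ (-((n:ℝ)*q))) := by
          rw [← ENNReal.ofReal_add (by positivity) (by positivity)]
          congr 1
          rw [hM]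
          field_simp
  calc (∫⁻ t in Ioi (0:ℝ),
      ENNReal.ofReal ((t ^ α * ‖fracKernel n α t z‖) ^ q / t)) ^ (1/q)
      ≤ ENNReal.ofReal (M * a ^ (-((n:ℝ)*q))) ^ (1/q) :=
        ENNReal.rpow_le_rpow key (by positivity)
    _ = ENNReal.ofReal ((M * a ^ (-((n:ℝ)*q))) ^ (1/q)) :=
        ENNReal.ofReal_rpow_of_pos (by positivity)
    _ = ENNReal.ofReal (M ^ (1/q) / a ^ n) := by
        congr 1
        rw [Real.mul_rpow hM0.le (Real.rpow_nonneg ha.le _), ← Real.rpow_mul ha.le,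
          show -((n:ℝ)*q) * (1/q) = -(n:ℝ) by field_simp,
          Real.rpow_neg ha.le, Real.rpow_natCast, div_eq_mul_inv]
        ring
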